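/- Let 𝔰₂, 𝔰₃, 𝔰₄ ∈ ℂ with 𝔰₄ + 2𝔰₂² ≠ 0. Then there exist a, b, c ∈ ℂ such that ac = 𝔰₂, (a² + c²)·b = 𝔰₃, and a⁴ + c⁴ = 𝔰₄. -/

import Mathlib

theorem stmt_4 (s2 s3 s4 : ℂ) (h : s4 + 2 * s2 ^ 2 ≠ 0) :
    ∃ a b c : ℂ, a * c = s2 ∧ (a ^ 2 + c ^ 2) * b = s3 ∧ a ^ 4 + c ^ 4 = s4 := by
  obtain ⟨s, hs⟩ := IsAlgClosed.exists_pow_nat_eq (k := ℂ) (s4 + 2 * s2 ^ 2) (n := 2) (by norm_num)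
  have hsne : s ≠ 0 := by
    intro h0; rw [h0] at hs; simp at hs; exact h hs.symm
  obtain ⟨d₀, hd₀⟩ := IsAlgClosed.exists_pow_nat_eq (k := ℂ) (s4 - 2 * s2 ^ 2) (n := 2) (by norm_num)
  -- choose sign of d so that s + d ≠ 0
  obtain ⟨d, hd, hsd⟩ : ∃ d : ℂ, d ^ 2 = s4 - 2 * s2 ^ 2 ∧ s + d ≠ 0 := by
    rcases eq_or_ne (s + d₀) 0 with h0 | h0
    · refine ⟨-d₀, by rw [neg_pow]; simpa using hd₀, ?_⟩
      intro h1
      exact hsne (by linear_combination (1/2 : ℂ) * h0 + (1/2 : ℂ) * h1)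
    · exact ⟨d₀, hd₀, h0⟩
  obtain ⟨a, ha⟩ := IsAlgClosed.exists_pow_nat_eq (k := ℂ) ((s + d) / 2) (n := 2) (by norm_num)
  have hane : a ≠ 0 := by
    intro h0; rw [h0] at ha; apply hsd
    have : (s + d) / 2 = 0 := by rw [← ha]; ring
    field_simp at this; simpa using this
  refine ⟨a, s3 / s, s2 / a, by field_simp, ?_, ?_⟩
  · have key : a ^ 2 + (s2 / a) ^ 2 = s := by
      field_simp
      linear_combination (a^2 - s + (s+d)/2) * ha - (1/4 : ℂ) * hs + (1/4 : ℂ) * hd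
    rw [key]; field_simp
  · field_simp
    linear_combination (a^4 + (s+d)^2/4 - s4) * (a^2 + (s+d)/2) * ha
      + (-(s+d)^2/8 - (s^2 - d^2 + 4*s2^2)/16 + (s+d)^2/4) * hs
      + (-(s+d)^2/8 + (s^2 - d^2 + 4*s2^2)/16 + (s+d)^2/4) * hd
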